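/- There exists a constant A_1 > 0, depending only on R and r_1, such that for any two tetrahedra T^(0), T^(1) ⊂ B_R(0) in R^3 each having insphere radius at least r_1, the minimum over permutations σ of {1,2,3,4} of max_{1≤i≤4} |P_i^(0) − P_{σ(i)}^(1)| is at most A_1 · d_H(T^(0), T^(1)), where {P_i^(k)} are the vertices of T^(k). -/

import Mathlib

open Metric Set
open scoped RealInnerProductSpace

noncomputable section

local notation "E" => EuclideanSpace ℝ (Fin 3)

lemma vertex_functional (P : Fin 4 → E) (hP : AffineIndependent ℝ P) (i : Fin 4) :
    ∃ u : E, ‖u‖ = 1 ∧ ∃ b h : ℝ, 0 < h ∧ (⟪u, P i⟫ = b + h) ∧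
      ∀ j, j ≠ i → (⟪u, P j⟫ = b) := by
  classical
  set s : AffineSubspace ℝ E := affineSpan ℝ (P '' ({i}ᶜ)) with hs
  have hne : (P '' ({i}ᶜ)).Nonempty := ⟨P (i+1), Set.mem_image_of_mem _ (by
    simp only [Set.mem_compl_iff, Set.mem_singleton_iff]
    intro h; exact absurd (congrArg Fin.val h) (by omega))⟩
  haveI : Nonempty ↥(P '' ({i}ᶜ)) := hne.to_subtype
  haveI : Nonempty s := inferInstance
  have hnotmem : P i ∉ s := by
    have h2 : ({i}ᶜ : Set (Fin 4)) = Set.univ \ {i} := Set.compl_eq_univ_diff _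
    rw [hs, h2]
    exact hP.notMem_affineSpan_sdiff i Set.univ
  set q : E := (EuclideanGeometry.orthogonalProjection s (P i) : E) with hq
  set v : E := P i - q with hv
  have hqmem : q ∈ s := EuclideanGeometry.orthogonalProjection_mem _
  have hvne : v ≠ 0 := by
    intro h0
    exact hnotmem ((sub_eq_zero.mp h0) ▸ hqmem)
  have hvorth : v ∈ s.directionᗮ := by
    have := EuclideanGeometry.vsub_orthogonalProjection_mem_direction_orthogonal s (P i)
    simpa [hv, hq, vsub_eq_sub] using this
  set u : E := ‖v‖⁻¹ • v with hu
  have hunorm : ‖u‖ = 1 := norm_smul_inv_norm hvne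
  have huv : ⟪u, v⟫ = ‖v‖ := by
    rw [hu, real_inner_smul_left, real_inner_self_eq_norm_mul_norm]
    field_simp
  refine ⟨u, hunorm, ⟪u, P i⟫ - ‖v‖, ‖v‖, norm_pos_iff.mpr hvne, by ring, ?_⟩
  intro j hj
  have hPj : P j ∈ s := mem_affineSpan ℝ (Set.mem_image_of_mem P (by simp [hj]))
  have hdir : q - P j ∈ s.direction := by
    have := AffineSubspace.vsub_mem_direction hqmem hPj
    simpa [vsub_eq_sub] using this
  have horth : ⟪u, q - P j⟫ = 0 := by
    rw [hu, real_inner_smul_left]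
    have : ⟪q - P j, v⟫ = 0 := hvorth (q - P j) hdir
    rw [real_inner_comm] at this
    rw [this, mul_zero]
  have : ⟪u, P i⟫ - ⟪u, P j⟫ = ‖v‖ := by
    have hdecomp : P i - P j = v + (q - P j) := by rw [hv]; abel
    calc ⟪u, P i⟫ - ⟪u, P j⟫ = ⟪u, P i - P j⟫ := by rw [inner_sub_right]
    _ = ⟪u, v⟫ + ⟪u, q - P j⟫ := by rw [hdecomp, inner_add_right]
    _ = ‖v‖ := by rw [huv, horth, add_zero]
  linarith

/-- The convex hull lies in the slab between the two functional values. -/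
lemma hull_slab (P : Fin 4 → E) (u : E) (b h : ℝ) (hh : 0 ≤ h)
    (hfi : ∀ j, b ≤ ⟪u, P j⟫ ∧ ⟪u, P j⟫ ≤ b + h) :
    ∀ x ∈ convexHull ℝ (Set.range P), b ≤ ⟪u, x⟫ ∧ ⟪u, x⟫ ≤ b + h := by
  have hlin : IsLinearMap ℝ (fun x : E => ⟪u, x⟫) :=
    ⟨fun x y => inner_add_right u x y, fun c x => real_inner_smul_right u x c⟩
  have hconv : Convex ℝ {x : E | b ≤ ⟪u, x⟫ ∧ ⟪u, x⟫ ≤ b + h} := by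
    have h1 := convex_halfSpace_ge hlin b
    have h2 := convex_halfSpace_le hlin (b + h)
    exact h1.inter h2
  intro x hx
  refine convexHull_min ?_ hconv hx
  rintro y ⟨j, rfl⟩
  exact hfi j

lemma sup_at_vertex (P : Fin 4 → E) (u : E) :
    ∃ j0 : Fin 4, ∀ x ∈ convexHull ℝ (Set.range P), ⟪u, x⟫ ≤ ⟪u, P j0⟫ := by
  obtain ⟨j0, -, hj0⟩ := Finset.exists_max_image Finset.univ (fun j => ⟪u, P j⟫)
    ⟨0, Finset.mem_univ 0⟩
  refine ⟨j0, ?_⟩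
  have hlin : IsLinearMap ℝ (fun x : E => ⟪u, x⟫) :=
    ⟨fun x y => inner_add_right u x y, fun c x => real_inner_smul_right u x c⟩
  intro x hx
  refine convexHull_min ?_ (convex_halfSpace_le hlin _) hx
  rintro y ⟨j, rfl⟩
  exact hj0 j (Finset.mem_univ j)

/-- Localization: a point of the hull where the functional is nearly maximal is close to
the corresponding vertex. -/
lemma localize (P : Fin 4 → E) (R : ℝ) (hball : ∀ j, ‖P j‖ < R)
    (u : E) (b h t : ℝ) (hu : ‖u‖ = 1) (hh : 0 < h) (ht : 0 ≤ t) (i : Fin 4)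
    (hfi : (⟪u, P i⟫ = b + h)) (hfj : ∀ j, j ≠ i → (⟪u, P j⟫ = b))
    (x : E) (hx : x ∈ convexHull ℝ (Set.range P)) (hfx : b + h - t ≤ ⟪u, x⟫) :
    ‖x - P i‖ ≤ t / h * (2 * R) := by
  classical
  rw [convexHull_range_eq_exists_affineCombination] at hx
  obtain ⟨sf, w, hw0, hw1, hxw⟩ := hx
  set w' : Fin 4 → ℝ := Set.indicator ↑sf w with hw'
  have hw'0 : ∀ j, 0 ≤ w' j := by
    intro j
    by_cases hj : j ∈ sf
    · simp [hw', Set.indicator_of_mem, hj, hw0 j hj]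
    · simp [hw', Set.indicator_of_notMem, hj]
  have hw'1 : ∑ j, w' j = 1 := by
    rw [← hw1]
    rw [Finset.sum_indicator_subset w (Finset.subset_univ sf)]
  have hxw' : x = ∑ j, w' j • P j := by
    have := Finset.affineCombination_indicator_subset w P (Finset.subset_univ sf)
    rw [this] at hxw
    rw [← hxw, Finset.affineCombination_eq_linear_combination _ _ _ hw'1]
  -- value of functional
  have hval : ⟪u, x⟫ = b + w' i * h := by
    rw [hxw', inner_sum]
    have : ∀ j, ⟪u, w' j • P j⟫ = w' j * ⟪u, P j⟫ := fun j =>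
      real_inner_smul_right u (P j) (w' j)
    simp_rw [this]
    have hsplit : ∑ j, w' j * ⟪u, P j⟫
        = w' i * (b + h) + ∑ j ∈ Finset.univ.erase i, w' j * b := by
      rw [← Finset.add_sum_erase Finset.univ (fun j => w' j * ⟪u, P j⟫)
        (Finset.mem_univ i), hfi]
      congr 1
      exact Finset.sum_congr rfl fun j hj => by
        rw [hfj j (Finset.ne_of_mem_erase hj)]
    rw [hsplit, ← Finset.sum_mul]
    have herase : ∑ j ∈ Finset.univ.erase i, w' j = 1 - w' i := by
      have := Finset.add_sum_erase Finset.univ w' (Finset.mem_univ i)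
      rw [hw'1] at this
      linarith
    rw [herase]; ring
  have hwi : 1 - w' i ≤ t / h := by
    have : b + h - t ≤ b + w' i * h := by rw [← hval]; exact hfx
    have h1 : h - t ≤ w' i * h := by linarith
    rw [le_div_iff₀ hh]
    nlinarith
  -- norm bound
  have hxsub : x - P i = ∑ j, w' j • (P j - P i) := by
    rw [hxw']
    have : ∑ j, w' j • (P j - P i) = (∑ j, w' j • P j) - (∑ j, w' j) • P i := by
      rw [Finset.sum_smul, ← Finset.sum_sub_distrib]
      congr 1; ext j; rw [smul_sub]
    rw [this, hw'1, one_smul]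
  have hnorm : ‖x - P i‖ ≤ ∑ j ∈ Finset.univ.erase i, w' j * (2 * R) := by
    rw [hxsub]
    have hsum_erase : ∑ j, w' j • (P j - P i)
        = ∑ j ∈ Finset.univ.erase i, w' j • (P j - P i) := by
      rw [← Finset.add_sum_erase _ _ (Finset.mem_univ i)]
      simp
    rw [hsum_erase]
    refine le_trans (norm_sum_le _ _) (Finset.sum_le_sum fun j hj => ?_)
    rw [norm_smul, Real.norm_eq_abs, abs_of_nonneg (hw'0 j)]
    refine mul_le_mul_of_nonneg_left ?_ (hw'0 j)
    calc ‖P j - P i‖ ≤ ‖P j‖ + ‖P i‖ := norm_sub_le _ _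
    _ ≤ 2 * R := by have := hball j; have := hball i; linarith
  have herase : ∑ j ∈ Finset.univ.erase i, w' j = 1 - w' i := by
    have := Finset.add_sum_erase Finset.univ w' (Finset.mem_univ i)
    rw [hw'1] at this
    linarith
  calc ‖x - P i‖ ≤ (1 - w' i) * (2 * R) := by
        rw [← Finset.sum_mul] at hnorm; rwa [herase] at hnorm
  _ ≤ t / h * (2 * R) := by
      refine mul_le_mul_of_nonneg_right hwi (by linarith [hball i, norm_nonneg (P i)])


/-- Combined: unit functional, slab containment, and lower bound `r1 ≤ h` from the insphere. -/
lemma vertex_functional' (R r1 : ℝ) (hr1 : 0 < r1) (P : Fin 4 → E)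
    (hP : AffineIndependent ℝ P) (c : E) (hc : Metric.ball c r1 ⊆ convexHull ℝ (Set.range P))
    (i : Fin 4) :
    ∃ u : E, ‖u‖ = 1 ∧ ∃ b h : ℝ, r1 ≤ h ∧ (⟪u, P i⟫ = b + h) ∧
      (∀ j, j ≠ i → (⟪u, P j⟫ = b)) ∧
      (∀ x ∈ convexHull ℝ (Set.range P), b ≤ ⟪u, x⟫ ∧ ⟪u, x⟫ ≤ b + h) := by
  obtain ⟨u, hu, b, h, hh, hfi, hfj⟩ := vertex_functional P hP i
  have hslab : ∀ x ∈ convexHull ℝ (Set.range P), b ≤ ⟪u, x⟫ ∧ ⟪u, x⟫ ≤ b + h := by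
    refine hull_slab P u b h hh.le fun j => ?_
    by_cases hj : j = i
    · subst hj; rw [hfi]; constructor <;> linarith
    · rw [hfj j hj]; constructor <;> linarith
  refine ⟨u, hu, b, h, ?_, hfi, hfj, hslab⟩
  -- show r1 ≤ h using the two points c ± (r1/2) • u of the inscribed ball
  have hmem1 : c + (r1/2) • u ∈ Metric.ball c r1 := by
    rw [Metric.mem_ball, dist_eq_norm]
    have : c + (r1/2) • u - c = (r1/2) • u := by abel
    rw [this, norm_smul, Real.norm_eq_abs, hu, mul_one, abs_of_pos (by linarith)]
    linarith
  have hmem2 : c - (r1/2) • u ∈ Metric.ball c r1 := by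
    rw [Metric.mem_ball, dist_eq_norm]
    have : c - (r1/2) • u - c = (-(r1/2)) • u := by
      rw [neg_smul]; abel
    rw [this, norm_smul, Real.norm_eq_abs, hu, mul_one, abs_of_neg (by linarith)]
    linarith
  have h1 := (hslab _ (hc hmem1)).2
  have h2 := (hslab _ (hc hmem2)).1
  have e1 : ⟪u, c + (r1/2) • u⟫ = ⟪u, c⟫ + r1/2 := by
    rw [inner_add_right, real_inner_smul_right, real_inner_self_eq_norm_mul_norm, hu]
    ring
  have e2 : ⟪u, c - (r1/2) • u⟫ = ⟪u, c⟫ - r1/2 := by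
    rw [inner_sub_right, real_inner_smul_right, real_inner_self_eq_norm_mul_norm, hu]
    ring
  rw [e1] at h1
  rw [e2] at h2
  linarith

theorem stmt3 (R r1 : ℝ) (hR : 0 < R) (hr1 : 0 < r1) :
    ∃ A1 : ℝ, 0 < A1 ∧
      ∀ P0 P1 : Fin 4 → EuclideanSpace ℝ (Fin 3),
        AffineIndependent ℝ P0 → AffineIndependent ℝ P1 →
        convexHull ℝ (Set.range P0) ⊆ Metric.ball 0 R →
        convexHull ℝ (Set.range P1) ⊆ Metric.ball 0 R →
        (∃ c0 : EuclideanSpace ℝ (Fin 3), Metric.ball c0 r1 ⊆ convexHull ℝ (Set.range P0)) →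
        (∃ c1 : EuclideanSpace ℝ (Fin 3), Metric.ball c1 r1 ⊆ convexHull ℝ (Set.range P1)) →
        ∃ σ : Equiv.Perm (Fin 4), ∀ i : Fin 4,
          dist (P0 i) (P1 (σ i)) ≤
            A1 * Metric.hausdorffDist (convexHull ℝ (Set.range P0))
                  (convexHull ℝ (Set.range P1)) := by
  classical
  set C : ℝ := 1 + 4 * R / r1 with hC
  have hCpos : 0 < C := by
    rw [hC]
    positivity
  refine ⟨C + 4 * R * C / r1, by positivity, ?_⟩
  set A1 : ℝ := C + 4 * R * C / r1 with hA1
  intro P0 P1 hind0 hind1 hB0 hB1 hc0 hc1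
  obtain ⟨c0, hc0⟩ := hc0
  obtain ⟨c1, hc1⟩ := hc1
  set T0 : Set E := convexHull ℝ (Set.range P0) with hT0
  set T1 : Set E := convexHull ℝ (Set.range P1) with hT1
  set d : ℝ := Metric.hausdorffDist T0 T1 with hd
  have hd0 : 0 ≤ d := Metric.hausdorffDist_nonneg
  have hT0ne : T0.Nonempty := ⟨P0 0, subset_convexHull ℝ _ (Set.mem_range_self 0)⟩
  have hT1ne : T1.Nonempty := ⟨P1 0, subset_convexHull ℝ _ (Set.mem_range_self 0)⟩
  have hT0c : IsCompact T0 := (Set.finite_range P0).isCompact_convexHull ℝ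
  have hT1c : IsCompact T1 := (Set.finite_range P1).isCompact_convexHull ℝ
  have hedist : Metric.hausdorffEDist T0 T1 ≠ ⊤ :=
    Metric.hausdorffEdist_ne_top_of_nonempty_of_bounded hT0ne hT1ne
      (Metric.isBounded_ball.subset hB0) (Metric.isBounded_ball.subset hB1)
  have hball0 : ∀ j, ‖P0 j‖ < R := fun j => by
    have := hB0 (subset_convexHull ℝ _ (Set.mem_range_self j))
    rwa [Metric.mem_ball, dist_zero_right] at this
  have hball1 : ∀ j, ‖P1 j‖ < R := fun j => by
    have := hB1 (subset_convexHull ℝ _ (Set.mem_range_self j))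
    rwa [Metric.mem_ball, dist_zero_right] at this
  -- separation of the vertices of P0
  have hsep : ∀ i j : Fin 4, i ≠ j → r1 ≤ dist (P0 i) (P0 j) := by
    intro i j hij
    obtain ⟨u, hu, b, h, hr1h, hfi, hfj, -⟩ :=
      vertex_functional' R r1 hr1 P0 hind0 c0 hc0 i
    have hval : ⟪u, P0 i - P0 j⟫ = h := by
      rw [inner_sub_right, hfi, hfj j (Ne.symm hij)]; ring
    have hcs : ⟪u, P0 i - P0 j⟫ ≤ ‖P0 i - P0 j‖ := by
      calc ⟪u, P0 i - P0 j⟫ ≤ ‖u‖ * ‖P0 i - P0 j‖ := real_inner_le_norm _ _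
      _ = ‖P0 i - P0 j‖ := by rw [hu, one_mul]
    rw [dist_eq_norm]
    linarith [hval ▸ hcs]
  -- key claim: each vertex of P0 has a vertex of P1 within C * d
  have hkey : ∀ i : Fin 4, ∃ j : Fin 4, dist (P0 i) (P1 j) ≤ C * d := by
    intro i
    obtain ⟨u, hu, b, h, hr1h, hfi, hfj, hslab0⟩ :=
      vertex_functional' R r1 hr1 P0 hind0 c0 hc0 i
    have hhpos : 0 < h := lt_of_lt_of_le hr1 hr1h
    obtain ⟨j0, hj0⟩ := sup_at_vertex P1 u
    -- P0 i is close to T1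
    have hinf1 : Metric.infDist (P0 i) T1 ≤ d :=
      Metric.infDist_le_hausdorffDist_of_mem
        (subset_convexHull ℝ _ (Set.mem_range_self i)) hedist
    obtain ⟨y1, hy1T, hy1d⟩ := hT1c.exists_infDist_eq_dist hT1ne (P0 i)
    rw [hy1d] at hinf1
    -- functional comparison via Cauchy-Schwarz
    have hcs : ∀ a c : E, |⟪u, a⟫ - ⟪u, c⟫| ≤ dist a c := by
      intro a c
      have : ⟪u, a⟫ - ⟪u, c⟫ = ⟪u, a - c⟫ := (inner_sub_right _ _ _).symm
      rw [this, dist_eq_norm]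
      calc |⟪u, a - c⟫| ≤ ‖u‖ * ‖a - c‖ := abs_real_inner_le_norm _ _
      _ = ‖a - c‖ := by rw [hu, one_mul]
    have hQlb : b + h - d ≤ ⟪u, P1 j0⟫ := by
      have h1 : |⟪u, P0 i⟫ - ⟪u, y1⟫| ≤ d := le_trans (hcs _ _) hinf1
      have h2 := hj0 y1 hy1T
      have := abs_le.mp h1
      rw [hfi] at this
      linarith [this.2]
    -- P1 j0 is close to T0
    have hinf0 : Metric.infDist (P1 j0) T0 ≤ d := by
      have := Metric.infDist_le_hausdorffDist_of_mem
        (subset_convexHull ℝ (Set.range P1) (Set.mem_range_self j0))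
        (by rwa [Metric.hausdorffEDist_comm] at hedist)
      rwa [Metric.hausdorffDist_comm] at this
    obtain ⟨x, hxT, hxd⟩ := hT0c.exists_infDist_eq_dist hT0ne (P1 j0)
    rw [hxd] at hinf0
    have hxlb : b + h - 2 * d ≤ ⟪u, x⟫ := by
      have h1 : |⟪u, P1 j0⟫ - ⟪u, x⟫| ≤ d := le_trans (hcs _ _) hinf0
      have := abs_le.mp h1
      linarith [this.2]
    have hloc : ‖x - P0 i‖ ≤ 2 * d / h * (2 * R) :=
      localize P0 R hball0 u b h (2 * d) hu hhpos (by linarith) i hfi hfj x hxT hxlb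
    refine ⟨j0, ?_⟩
    have htri : dist (P0 i) (P1 j0) ≤ ‖x - P0 i‖ + dist (P1 j0) x := by
      calc dist (P0 i) (P1 j0) ≤ dist (P0 i) x + dist x (P1 j0) := dist_triangle _ _ _
      _ = ‖x - P0 i‖ + dist (P1 j0) x := by
          rw [dist_eq_norm, ← norm_neg (P0 i - x), dist_comm x]
          congr 1
          abel_nf
    have hbound : 2 * d / h * (2 * R) ≤ 4 * R * d / r1 := by
      rw [div_mul_eq_mul_div, div_le_div_iff₀ hhpos hr1]
      have : 2 * d * (2 * R) * r1 = 4 * R * d * r1 := by ring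
      rw [this]
      have h4Rd : 0 ≤ 4 * R * d := by positivity
      exact mul_le_mul_of_nonneg_left hr1h h4Rd
    have : dist (P0 i) (P1 j0) ≤ 4 * R * d / r1 + d := by linarith
    calc dist (P0 i) (P1 j0) ≤ 4 * R * d / r1 + d := this
    _ = C * d := by rw [hC]; ring
  choose g hg using hkey
  by_cases hcase : 2 * C * d < r1
  · -- g is injective, hence a permutation
    have hginj : Function.Injective g := by
      intro i j hgij
      by_contra hij
      have h1 := hg i
      have h2 := hg j
      rw [hgij] at h1
      have := hsep i j hij
      have htri : dist (P0 i) (P0 j) ≤ dist (P0 i) (P1 (g j)) + dist (P1 (g j)) (P0 j) := dist_triangle _ _ _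
      rw [dist_comm (P1 (g j))] at htri
      linarith
    have hgbij : Function.Bijective g := Finite.injective_iff_bijective.mp hginj
    refine ⟨Equiv.ofBijective g hgbij, fun i => ?_⟩
    have : dist (P0 i) (P1 (g i)) ≤ C * d := hg i
    have hCA : C ≤ A1 := by
      rw [hA1]
      have : 0 ≤ 4 * R * C / r1 := by positivity
      linarith
    calc dist (P0 i) (P1 ((Equiv.ofBijective g hgbij) i)) = dist (P0 i) (P1 (g i)) := rfl
    _ ≤ C * d := hg i
    _ ≤ A1 * d := mul_le_mul_of_nonneg_right hCA hd0
  · -- d is large: any permutation works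
    push_neg at hcase
    refine ⟨1, fun i => ?_⟩
    have h2R : dist (P0 i) (P1 ((1 : Equiv.Perm (Fin 4)) i)) ≤ 2 * R := by
      calc dist (P0 i) (P1 _) ≤ ‖P0 i‖ + ‖P1 _‖ := by
            rw [dist_eq_norm]; exact norm_sub_le _ _
      _ ≤ 2 * R := by linarith [hball0 i, hball1 ((1 : Equiv.Perm (Fin 4)) i)]
    have : 2 * R ≤ A1 * d := by
      have hstep : 4 * R * C / r1 * d = (2 * R / r1) * (2 * C * d) := by ring
      have h1 : 2 * R = (2 * R / r1) * r1 := by field_simp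
      have h2 : (2 * R / r1) * r1 ≤ (2 * R / r1) * (2 * C * d) := by
        refine mul_le_mul_of_nonneg_left hcase (by positivity)
      have h3 : (2 * R / r1) * (2 * C * d) ≤ A1 * d := by
        rw [hA1, ← hstep]
        have hCd : 0 ≤ C * d := mul_nonneg hCpos.le hd0
        nlinarith
      calc 2 * R = 2 * R / r1 * r1 := h1
      _ ≤ 2 * R / r1 * (2 * C * d) := h2
      _ ≤ A1 * d := h3
    linarith

end
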